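/- Let λ > 0, α0 > 1 and σ > 0, and let A be a random variable such that log(A − 1) is Gaussian with mean log(α0 − 1) − σ²/2 and standard deviation σ. Then E[ λ·A/(A − 1) ] = λ·(α0 − 1 + e^{σ²})/(α0 − 1). Equivalently, if Y' denotes a Pareto variable with scale λ and stochastic tail exponent A, and Y a Pareto variable with scale λ and constant exponent α0, then E[Y'] = E[Y] + λ(e^{σ²} − 1)/(α0 − 1). -/

import Mathlib

open MeasureTheory ProbabilityTheory Real
open scoped NNReal ENNReal

lemma pdf_shift (μ : ℝ) (v : ℝ≥0) (hv : (0:ℝ) < v) (x : ℝ) :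
    Real.exp (-x) * gaussianPDFReal μ v x
      = Real.exp ((v:ℝ)/2 - μ) * gaussianPDFReal (μ - v) v x := by
  unfold gaussianPDFReal
  rw [mul_left_comm, mul_left_comm (Real.exp _), ← Real.exp_add, ← Real.exp_add]
  congr 2
  field_simp
  ring

lemma exp_neg_integrable (μ : ℝ) (v : ℝ≥0) (hv : (0:ℝ) < v) :
    Integrable (fun x => Real.exp (-x)) (gaussianReal μ v) := by
  have hvne : v ≠ 0 := by exact_mod_cast hv.ne'
  rw [gaussianReal_of_var_ne_zero μ hvne, gaussianPDF_def]
  have : (fun x => ENNReal.ofReal (gaussianPDFReal μ v x))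
      = fun x => ((gaussianPDFReal μ v x).toNNReal : ℝ≥0∞) := by
    ext x; simp [ENNReal.ofReal]
  rw [this, integrable_withDensity_iff_integrable_smul]
  · have : (fun x => (gaussianPDFReal μ v x).toNNReal • Real.exp (-x))
        = fun x => Real.exp ((v:ℝ)/2 - μ) * gaussianPDFReal (μ - v) v x := by
      ext x
      rw [NNReal.smul_def, smul_eq_mul, Real.coe_toNNReal _ (gaussianPDFReal_nonneg μ v x),
        mul_comm, pdf_shift μ v hv x]
    rw [this]
    exact (integrable_gaussianPDFReal (μ - v) v).const_mul _
  · exact (measurable_gaussianPDFReal μ v).real_toNNReal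

lemma integral_exp_neg_gaussian (μ : ℝ) (v : ℝ≥0) (hv : (0:ℝ) < v) :
    ∫ x, Real.exp (-x) ∂(gaussianReal μ v) = Real.exp ((v:ℝ)/2 - μ) := by
  have hvne : v ≠ 0 := by exact_mod_cast hv.ne'
  rw [gaussianReal_of_var_ne_zero μ hvne, gaussianPDF_def]
  have h1 : (fun x => ENNReal.ofReal (gaussianPDFReal μ v x))
      = fun x => ((gaussianPDFReal μ v x).toNNReal : ℝ≥0∞) := by
    ext x; simp [ENNReal.ofReal]
  rw [h1, integral_withDensity_eq_integral_smul
      ((measurable_gaussianPDFReal μ v).real_toNNReal)]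
  have h2 : (fun x => (gaussianPDFReal μ v x).toNNReal • Real.exp (-x))
      = fun x => Real.exp ((v:ℝ)/2 - μ) * gaussianPDFReal (μ - v) v x := by
    ext x
    rw [NNReal.smul_def, smul_eq_mul, Real.coe_toNNReal _ (gaussianPDFReal_nonneg μ v x),
      mul_comm, pdf_shift μ v hv x]
  rw [h2, integral_const_mul, integral_gaussianPDFReal_eq_one (μ - v) hvne, mul_one]

theorem lognormal_exponent_mean {Ω : Type*} [MeasurableSpace Ω] (P : Measure Ω)
    [IsProbabilityMeasure P] (lam α₀ σ : ℝ) (hlam : 0 < lam) (hα₀ : 1 < α₀) (hσ : 0 < σ)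
    (A : Ω → ℝ) (hA : Measurable A) (hgt : ∀ᵐ ω ∂P, 1 < A ω)
    (hlaw : Measure.map (fun ω => Real.log (A ω - 1)) P
      = gaussianReal (Real.log (α₀ - 1) - σ ^ 2 / 2) ⟨σ ^ 2, sq_nonneg σ⟩) :
    ∫ ω, lam * A ω / (A ω - 1) ∂P
        = lam * (α₀ - 1 + Real.exp (σ ^ 2)) / (α₀ - 1) ∧
    ∫ ω, lam * A ω / (A ω - 1) ∂P
        = lam * α₀ / (α₀ - 1) + lam * (Real.exp (σ ^ 2) - 1) / (α₀ - 1) := by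
  set v : ℝ≥0 := ⟨σ ^ 2, sq_nonneg σ⟩ with hv
  set μ₀ : ℝ := Real.log (α₀ - 1) - σ ^ 2 / 2 with hμ₀
  have hvpos : (0:ℝ) < v := by rw [hv]; exact pow_pos hσ 2
  have hL : Measurable (fun ω => Real.log (A ω - 1)) :=
    Real.measurable_log.comp (hA.sub measurable_const)
  -- integrability of the exp(-log) part
  have hint : Integrable (fun ω => Real.exp (-(Real.log (A ω - 1)))) P := by
    have := (exp_neg_integrable μ₀ v hvpos)
    rw [← hlaw] at this
    exact (integrable_map_measure
      (Real.continuous_exp.comp continuous_neg).aestronglyMeasurable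
      hL.aemeasurable).mp this
  -- value of the exp(-log) integral
  have hval : ∫ ω, Real.exp (-(Real.log (A ω - 1))) ∂P = Real.exp (σ ^ 2) / (α₀ - 1) := by
    have hg : AEStronglyMeasurable (fun x : ℝ => Real.exp (-x))
        (Measure.map (fun ω => Real.log (A ω - 1)) P) :=
      Continuous.aestronglyMeasurable (by continuity)
    have h := integral_map hL.aemeasurable hg
    rw [hlaw, integral_exp_neg_gaussian μ₀ v hvpos] at h
    rw [← h]
    have : (v:ℝ)/2 - μ₀ = σ ^ 2 - Real.log (α₀ - 1) := by
      show σ ^ 2 / 2 - (Real.log (α₀ - 1) - σ ^ 2 / 2) = σ ^ 2 - Real.log (α₀ - 1); ring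
    rw [this, Real.exp_sub, Real.exp_log (by linarith)]
  -- a.e. rewrite of the integrand
  have hae : (fun ω => lam * A ω / (A ω - 1))
      =ᵐ[P] fun ω => lam + lam * Real.exp (-(Real.log (A ω - 1))) := by
    filter_upwards [hgt] with ω hω
    have h1 : A ω - 1 > 0 := by linarith
    rw [Real.exp_neg, Real.exp_log h1]
    field_simp
    ring
  have hmain : ∫ ω, lam * A ω / (A ω - 1) ∂P
      = lam + lam * (Real.exp (σ ^ 2) / (α₀ - 1)) := by
    rw [integral_congr_ae hae, integral_add (integrable_const _) (hint.const_mul _),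
      integral_const, integral_const_mul, hval]
    simp
  have hfirst : ∫ ω, lam * A ω / (A ω - 1) ∂P
      = lam * (α₀ - 1 + Real.exp (σ ^ 2)) / (α₀ - 1) := by
    have hne : α₀ - 1 ≠ 0 := by linarith
    rw [hmain]; field_simp
  have hne : α₀ - 1 ≠ 0 := by linarith
  refine ⟨hfirst, ?_⟩
  rw [hfirst]; field_simp; ring
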